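/- Let S be a topological Clifford semigroup with set of idempotents E. Then the diagonal number of S satisfies Δ(S) ≤ Δ(E) · ψ(E,S), where Δ(X) is the smallest infinite cardinality of a family of open subsets of X×X whose intersection is the diagonal, and ψ(E,S) is the smallest infinite cardinality of a family of open subsets of S whose intersection equals E. -/

import Mathlib

open Cardinal

/-- The pseudocharacter `ψ(A, X)`: the smallest infinite cardinal `κ` for which there
is a family of open subsets of `X` of cardinality `≤ κ` whose intersection is `A`. -/
noncomputable def pseudoChar {X : Type*} [TopologicalSpace X] (A : Set X) : Cardinal :=
  sInf {c : Cardinal | Cardinal.aleph0 ≤ c ∧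
    ∃ 𝒰 : Set (Set X), (∀ U ∈ 𝒰, IsOpen U) ∧ ⋂₀ 𝒰 = A ∧ Cardinal.mk 𝒰 ≤ c}

/-- The diagonal number `Δ(X) = ψ(Δ_X, X × X)`. -/
noncomputable def diagNumber (X : Type*) [TopologicalSpace X] : Cardinal :=
  pseudoChar {p : X × X | p.1 = p.2}

lemma pseudoChar_le {X : Type*} [TopologicalSpace X] {A : Set X} {c : Cardinal}
    (hc : Cardinal.aleph0 ≤ c)
    (h : ∃ 𝒰 : Set (Set X), (∀ U ∈ 𝒰, IsOpen U) ∧ ⋂₀ 𝒰 = A ∧ Cardinal.mk 𝒰 ≤ c) :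
    pseudoChar A ≤ c :=
  csInf_le' ⟨hc, h⟩

lemma pseudoChar_mem {X : Type*} [TopologicalSpace X] {A : Set X}
    (h : ∃ 𝒰 : Set (Set X), (∀ U ∈ 𝒰, IsOpen U) ∧ ⋂₀ 𝒰 = A) :
    Cardinal.aleph0 ≤ pseudoChar A ∧
      ∃ 𝒰 : Set (Set X), (∀ U ∈ 𝒰, IsOpen U) ∧ ⋂₀ 𝒰 = A ∧ Cardinal.mk 𝒰 ≤ pseudoChar A := by
  obtain ⟨𝒰, hU1, hU2⟩ := h
  have hne : {c : Cardinal | Cardinal.aleph0 ≤ c ∧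
      ∃ 𝒰 : Set (Set X), (∀ U ∈ 𝒰, IsOpen U) ∧ ⋂₀ 𝒰 = A ∧ Cardinal.mk 𝒰 ≤ c}.Nonempty :=
    ⟨max Cardinal.aleph0 (Cardinal.mk 𝒰),
      le_max_left _ _, 𝒰, hU1, hU2, le_max_right _ _⟩
  exact csInf_mem hne

lemma pseudoChar_cases {X : Type*} [TopologicalSpace X] (A : Set X) :
    pseudoChar A = 0 ∨ (Cardinal.aleph0 ≤ pseudoChar A ∧
      ∃ 𝒰 : Set (Set X), (∀ U ∈ 𝒰, IsOpen U) ∧ ⋂₀ 𝒰 = A ∧ Cardinal.mk 𝒰 ≤ pseudoChar A) := by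
  rcases Set.eq_empty_or_nonempty {c : Cardinal | Cardinal.aleph0 ≤ c ∧
      ∃ 𝒰 : Set (Set X), (∀ U ∈ 𝒰, IsOpen U) ∧ ⋂₀ 𝒰 = A ∧ Cardinal.mk 𝒰 ≤ c} with h | h
  · left
    unfold pseudoChar
    rw [h]
    exact Cardinal.sInf_empty
  · right
    exact csInf_mem h

lemma sInter_image_preimage {α β : Type*} (f : α → β) (𝒮 : Set (Set β)) :
    ⋂₀ ((fun U => f ⁻¹' U) '' 𝒮) = f ⁻¹' ⋂₀ 𝒮 := by
  ext x
  simp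

/-- For a topological Clifford semigroup `S` with idempotent set `E`:
`Δ(S) ≤ Δ(E) * ψ(E, S)`. -/
theorem diagNumber_le_of_clifford {S : Type*} [TopologicalSpace S] [Semigroup S]
    [ContinuousMul S] (inv : S → S) (hinv : Continuous inv)
    (h1 : ∀ x : S, x * inv x * x = x)
    (h2 : ∀ x : S, inv x * x * inv x = inv x)
    (h3 : ∀ x : S, x * inv x = inv x * x) :
    diagNumber S ≤ diagNumber ↥{e : S | e * e = e} * pseudoChar {e : S | e * e = e} := by
  classical
  -- Algebraic preliminaries
  have hx_e : ∀ x : S, x * (x * inv x) = x := by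
    intro x
    rw [h3, ← mul_assoc, h1]
  have pi_idem : ∀ x : S, (x * inv x) * (x * inv x) = x * inv x := by
    intro x
    rw [mul_assoc, ← mul_assoc (inv x), h2]
  have key : ∀ x y : S, x * inv x = y * inv y →
      (x * inv y) * (x * inv y) = x * inv y → x = y := by
    intro x y hee hgg
    have h1' : x * (inv y * y) = x := by
      rw [← h3 y, ← hee]; exact hx_e x
    have hgh : (x * inv y) * (y * inv x) = x * inv x := by
      rw [mul_assoc x, ← mul_assoc (inv y), ← mul_assoc x, h1']
    have hge : (x * inv y) * (x * inv x) = x * inv y := by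
      rw [hee, mul_assoc x, ← mul_assoc (inv y), h2]
    have hg : x * inv y = x * inv x := by
      calc x * inv y = (x * inv y) * (x * inv x) := hge.symm
        _ = (x * inv y) * ((x * inv y) * (y * inv x)) := by rw [hgh]
        _ = ((x * inv y) * (x * inv y)) * (y * inv x) := (mul_assoc _ _ _).symm
        _ = (x * inv y) * (y * inv x) := by rw [hgg]
        _ = x * inv x := hgh
    calc x = x * (inv y * y) := h1'.symm
      _ = (x * inv y) * y := by rw [mul_assoc]
      _ = (x * inv x) * y := by rw [hg]
      _ = (y * inv y) * y := by rw [hee]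
      _ = y := h1 y
  -- Topological part
  rcases pseudoChar_cases {p : S × S | p.1 = p.2} with h0 | ⟨-, 𝒰, hUo, hUi, -⟩
  · have : diagNumber S = 0 := h0
    rw [this]
    exact zero_le
  -- the inclusion map of E × E into S × S
  set E : Set S := {e : S | e * e = e} with hE
  set j : ↥E × ↥E → S × S := Prod.map Subtype.val Subtype.val with hj
  have hjcont : Continuous j :=
    (continuous_subtype_val.comp continuous_fst).prodMk
      (continuous_subtype_val.comp continuous_snd)
  have hjind : Topology.IsInducing j :=
    Topology.IsInducing.subtypeVal.prodMap Topology.IsInducing.subtypeVal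
  -- a family for E in S
  have hEfam : ∃ 𝒱 : Set (Set S), (∀ U ∈ 𝒱, IsOpen U) ∧ ⋂₀ 𝒱 = E := by
    refine ⟨(fun U => (fun x : S => ((x * x : S), x)) ⁻¹' U) '' 𝒰, ?_, ?_⟩
    · rintro U ⟨W, hW, rfl⟩
      exact (hUo W hW).preimage ((continuous_id.mul continuous_id).prodMk continuous_id)
    · rw [sInter_image_preimage, hUi]
      rfl
  -- a family for the diagonal of E × E
  have hDfam : ∃ 𝒱 : Set (Set (↥E × ↥E)), (∀ U ∈ 𝒱, IsOpen U) ∧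
      ⋂₀ 𝒱 = {p : ↥E × ↥E | p.1 = p.2} := by
    refine ⟨(fun U => j ⁻¹' U) '' 𝒰, ?_, ?_⟩
    · rintro U ⟨W, hW, rfl⟩
      exact (hUo W hW).preimage hjcont
    · rw [sInter_image_preimage, hUi]
      ext p
      simp [hj, Subtype.ext_iff]
  obtain ⟨hκ1, 𝒜, hAo, hAi, hAc⟩ := pseudoChar_mem hDfam
  obtain ⟨hκ2, ℬ, hBo, hBi, hBc⟩ := pseudoChar_mem hEfam
  set κ1 : Cardinal := pseudoChar {p : ↥E × ↥E | p.1 = p.2} with hκ1def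
  set κ2 : Cardinal := pseudoChar E with hκ2def
  -- choose open sets in S × S inducing the members of 𝒜
  have hch : ∀ U : ↥𝒜, ∃ V : Set (S × S), IsOpen V ∧ j ⁻¹' V = (U : Set (↥E × ↥E)) :=
    fun U => hjind.isOpen_iff.mp (hAo U U.2)
  choose V hVo hVp using hch
  -- continuous maps
  set Φ : S × S → S × S := fun p => (p.1 * inv p.1, p.2 * inv p.2) with hΦdef
  have hΦ : Continuous Φ :=
    (continuous_fst.mul (hinv.comp continuous_fst)).prodMk
      (continuous_snd.mul (hinv.comp continuous_snd))
  set g : S × S → S := fun p => p.1 * inv p.2 with hgdef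
  have hgc : Continuous g := continuous_fst.mul (hinv.comp continuous_snd)
  -- the witnessing family for the diagonal of S
  set 𝒰' : Set (Set (S × S)) :=
    (Set.range fun U : ↥𝒜 => Φ ⁻¹' V U) ∪ ((fun W => g ⁻¹' W) '' ℬ) with h𝒰'
  have hopen : ∀ U ∈ 𝒰', IsOpen U := by
    rintro U (⟨W, rfl⟩ | ⟨W, hW, rfl⟩)
    · exact (hVo W).preimage hΦ
    · exact (hBo W hW).preimage hgc
  have hinter : ⋂₀ 𝒰' = {p : S × S | p.1 = p.2} := by
    ext ⟨x, y⟩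
    constructor
    · intro hp
      have hre : ∀ U : ↥𝒜, Φ (x, y) ∈ V U := fun U => hp _ (Or.inl ⟨U, rfl⟩)
      have hWs : ∀ W ∈ ℬ, x * inv y ∈ W := fun W hW => hp _ (Or.inr ⟨W, hW, rfl⟩)
      have hEmem : (x * inv y) * (x * inv y) = x * inv y := by
        have : x * inv y ∈ ⋂₀ ℬ := fun W hW => hWs W hW
        rw [hBi] at this
        exact this
      have hpt : ((⟨x * inv x, pi_idem x⟩ : ↥E), (⟨y * inv y, pi_idem y⟩ : ↥E)) ∈
          {p : ↥E × ↥E | p.1 = p.2} := by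
        rw [← hAi]
        intro U hU
        have h5 := hre ⟨U, hU⟩
        have h6 : ((⟨x * inv x, pi_idem x⟩ : ↥E), (⟨y * inv y, pi_idem y⟩ : ↥E)) ∈
            j ⁻¹' V ⟨U, hU⟩ := h5
        rw [hVp ⟨U, hU⟩] at h6
        exact h6
      exact key x y (congrArg Subtype.val hpt) hEmem
    · intro hp
      have hxy : x = y := hp
      subst hxy
      rintro T (⟨U, rfl⟩ | ⟨W, hW, rfl⟩)
      · have hd : ((⟨x * inv x, pi_idem x⟩ : ↥E), (⟨x * inv x, pi_idem x⟩ : ↥E)) ∈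
            ⋂₀ 𝒜 := by
          rw [hAi]; exact rfl
        have h6 := hd _ U.2
        rw [← hVp U] at h6
        exact h6
      · have : x * inv x ∈ ⋂₀ ℬ := by rw [hBi]; exact pi_idem x
        exact this W hW
  have hcard : Cardinal.mk 𝒰' ≤ κ1 * κ2 := by
    calc Cardinal.mk 𝒰'
        ≤ Cardinal.mk (Set.range fun U : ↥𝒜 => Φ ⁻¹' V U) +
            Cardinal.mk ((fun W => g ⁻¹' W) '' ℬ) := Cardinal.mk_union_le _ _
      _ ≤ Cardinal.mk ↥𝒜 + Cardinal.mk ↥ℬ :=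
          add_le_add Cardinal.mk_range_le Cardinal.mk_image_le
      _ ≤ κ1 + κ2 := add_le_add hAc hBc
      _ ≤ κ1 * κ2 := by
          rw [Cardinal.mul_eq_max hκ1 hκ2, Cardinal.add_eq_max hκ1]
  have haleph : Cardinal.aleph0 ≤ κ1 * κ2 := by
    refine hκ1.trans ?_
    rw [Cardinal.mul_eq_max hκ1 hκ2]
    exact le_max_left _ _
  exact pseudoChar_le haleph ⟨𝒰', hopen, hinter, hcard⟩
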